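/- Let n = n₁·n₂ with n₁, n₂ > 1 and A = {u·n₁·n + v : 0 ≤ u < n₂, 0 ≤ v < n₁}. If y and y′ are nonnegative integers each representable in base n with digits from A (i.e., each admits an A-expansion), then y − y′ ≢ u·n₁ (mod n) for every u with 1 ≤ u < n₂. -/

import Mathlib

/-- `l` is an `A`-expansion of `k` in base `n`: all digits in `A`, nonzero leading digit,
and value `k`. The empty list is the expansion of `0`. -/
def IsExpansion (n : ℕ) (A : Finset ℕ) (k : ℕ) (l : List ℕ) : Prop :=
  (∀ d ∈ l, d ∈ A) ∧ l.getLast? ≠ some 0 ∧ Nat.ofDigits n l = k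

/-- Every nonnegative integer has at most one `A`-expansion in base `n`. -/
def UniqueExpansions (n : ℕ) (A : Finset ℕ) : Prop :=
  ∀ k : ℕ, ∀ l₁ l₂ : List ℕ, IsExpansion n A k l₁ → IsExpansion n A k l₂ → l₁ = l₂

/-- The family `f` generates a free semigroup under composition: distinct nonempty
words give distinct composed functions. Composition is left-to-right:
`[u₁,…,u_p] ↦ f u₁ ∘ ⋯ ∘ f u_p`. -/
def FreeComp {α ι : Type*} (f : ι → α → α) : Prop :=
  ∀ w₁ w₂ : List ι, w₁ ≠ [] → w₂ ≠ [] →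
    (w₁.map f).foldr (· ∘ ·) id = (w₂.map f).foldr (· ∘ ·) id → w₁ = w₂

/-- `k` is representable in base `n` with digits from `A`. -/
def Representable (n : ℕ) (A : Finset ℕ) (k : ℕ) : Prop :=
  ∃ l : List ℕ, IsExpansion n A k l

lemma residue_lt (n₁ n₂ n : ℕ) (h₁ : 1 < n₁) (hn : n = n₁ * n₂)
    (A : Finset ℕ)
    (hA : A = (Finset.range n₂ ×ˢ Finset.range n₁).image
      (fun p => p.1 * n₁ * n + p.2))
    (y : ℕ) (hy : Representable n A y) :
    ∃ v : ℕ, v < n₁ ∧ (n : ℤ) ∣ (y : ℤ) - v := by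
  obtain ⟨l, hdig, -, hval⟩ := hy
  cases l with
  | nil =>
    have hy0 : y = 0 := by simpa using hval.symm
    exact ⟨0, by omega, by simp [hy0]⟩
  | cons d t =>
    have hd : d ∈ A := hdig d List.mem_cons_self
    rw [hA, Finset.mem_image] at hd
    obtain ⟨⟨u', v⟩, hp, rfl⟩ := hd
    simp only [Finset.mem_product, Finset.mem_range] at hp
    refine ⟨v, hp.2, ⟨u' * n₁ + Nat.ofDigits n t, ?_⟩⟩
    have : (y : ℤ) = (u' * n₁ * n + v : ℕ) + n * Nat.ofDigits n t := by
      rw [← hval, Nat.ofDigits_cons]; push_cast; ring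
    rw [this]; push_cast; ring
theorem stmt8 (n₁ n₂ : ℕ) (h₁ : 1 < n₁) (h₂ : 1 < n₂) (n : ℕ) (hn : n = n₁ * n₂)
    (A : Finset ℕ)
    (hA : A = (Finset.range n₂ ×ˢ Finset.range n₁).image
      (fun p => p.1 * n₁ * n + p.2))
    (y y' : ℕ) (hy : Representable n A y) (hy' : Representable n A y') :
    ∀ u : ℕ, 1 ≤ u → u < n₂ → ¬ ((y : ℤ) - (y' : ℤ) ≡ (u * n₁ : ℕ) [ZMOD n]) := by
  obtain ⟨v, hv, hd⟩ := residue_lt n₁ n₂ n h₁ hn A hA y hy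
  obtain ⟨v', hv', hd'⟩ := residue_lt n₁ n₂ n h₁ hn A hA y' hy'
  intro u hu1 hu2 hmod
  have h3 : (n : ℤ) ∣ ((u * n₁ : ℕ) : ℤ) - ((y : ℤ) - y') := hmod.dvd
  have h4 : (n : ℤ) ∣ ((u * n₁ : ℕ) : ℤ) - ((v : ℤ) - v') := by
    have h := (h3.add hd).sub hd'
    have e : ((u * n₁ : ℕ) : ℤ) - ((v : ℤ) - v') =
        (((u * n₁ : ℕ) : ℤ) - ((y : ℤ) - y')) + ((y : ℤ) - v) - ((y' : ℤ) - v') := by ring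
    rw [e]; exact h
  have hpos : 0 < ((u * n₁ : ℕ) : ℤ) - ((v : ℤ) - v') := by
    push_cast
    have : (v : ℤ) < n₁ := by exact_mod_cast hv
    nlinarith [Int.ofNat_nonneg v', Int.ofNat_nonneg u, (by exact_mod_cast hu1 : (1:ℤ) ≤ u)]
  have hlt : ((u * n₁ : ℕ) : ℤ) - ((v : ℤ) - v') < n := by
    push_cast
    have h5 : (u : ℤ) ≤ n₂ - 1 := by
      have : (u : ℤ) < n₂ := by exact_mod_cast hu2
      omega
    have h6 : (v' : ℤ) < n₁ := by exact_mod_cast hv'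
    have h7 : (0:ℤ) ≤ v := Int.ofNat_nonneg v
    have hnn : (n : ℤ) = n₁ * n₂ := by exact_mod_cast hn
    nlinarith [(by exact_mod_cast Nat.lt_of_lt_of_le Nat.zero_lt_one h₁.le : (0:ℤ) < n₁)]
  have := Int.le_of_dvd hpos h4
  omega
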